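/- arXiv:2410.13913 — 2 statements merged into one kernel-verified Lean document; each statement's English description precedes it below -/
import Mathlib

section
/- Let n = k+1, s = k−1, α ∈ ℝ, and z ∈ ℝ^n with z_1 = z_2 = −α. Then S_{k;s}(z) = (−2α/(k(k+1)))·P, S_{k-1;s}(z) = (2/(k(k+1)))·P, and S_{k+1;s}(z) = (2α²/(k(k+1)))·P, where P = σ_{k-1}(z') + ασ_{k-2}(z') + ⋯ + α^{k-1} with z' = (z_3,...,z_n). In particular, if P ≠ 0 then S_{k;s}(z)/S_{k-1;s}(z) = S_{k+1;s}(z)/S_{k;s}(z) = −α. -/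
/-- The k-th elementary symmetric polynomial of `x : Fin n → ℝ`, with the
conventions `σ_0 = 1` and `σ_k = 0` for `k < 0` or `k > n`. -/
noncomputable def esymm (n : ℕ) (x : Fin n → ℝ) (k : ℤ) : ℝ :=
  if 0 ≤ k then ∑ s ∈ (Finset.univ : Finset (Fin n)).powersetCard k.toNat, ∏ i ∈ s, x i else 0

/-- The normalized elementary symmetric mean `E_k(x) = σ_k(x) / C(n,k)`. -/
noncomputable def Esymm (n : ℕ) (x : Fin n → ℝ) (k : ℤ) : ℝ :=
  esymm n x k / (n.choose k.toNat)


/-- `S_{m;s}(x) = ∑_{i=0}^{s} C(s,i) α^i E_{m-i}(x)`. -/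
noncomputable def Ss (n : ℕ) (α : ℝ) (x : Fin n → ℝ) (s : ℕ) (m : ℤ) : ℝ :=
  ∑ i ∈ Finset.range (s + 1), (s.choose i : ℝ) * α ^ i * Esymm n x (m - i)

open Finset

lemma esymm_neg (n : ℕ) (x : Fin n → ℝ) {m : ℤ} (hm : m < 0) : esymm n x m = 0 := by
  simp [esymm, not_le.2 hm]

lemma esymm_big (n : ℕ) (x : Fin n → ℝ) {m : ℤ} (hm : (n : ℤ) < m) : esymm n x m = 0 := by
  unfold esymm
  rw [if_pos (by omega), Finset.powersetCard_eq_empty.2 (by simp; omega), Finset.sum_empty]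

lemma multiset_esymm_cons (a : ℝ) (s : Multiset ℝ) (t : ℕ) :
    (a ::ₘ s).esymm (t + 1) = s.esymm (t + 1) + a * s.esymm t := by
  simp only [Multiset.esymm, Multiset.powersetCard_cons, Multiset.map_add, Multiset.sum_add,
    Multiset.map_map, Function.comp_def, Multiset.prod_cons, Multiset.sum_map_mul_left]

lemma univ_val_map_succ (n : ℕ) (x : Fin (n + 1) → ℝ) :
    (Finset.univ : Finset (Fin (n + 1))).val.map x
      = x 0 ::ₘ (Finset.univ : Finset (Fin n)).val.map (x ∘ Fin.succ) := by
  rw [Fin.univ_succ, Finset.cons_val, Multiset.map_cons, Finset.map_val, Multiset.map_map]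
  rfl

lemma esymm_succ (n : ℕ) (x : Fin (n + 1) → ℝ) (m : ℤ) :
    esymm (n + 1) x m = x 0 * esymm n (x ∘ Fin.succ) (m - 1) + esymm n (x ∘ Fin.succ) m := by
  rcases lt_trichotomy m 0 with hm | hm | hm
  · rw [esymm_neg _ _ hm, esymm_neg _ _ (by omega : m - 1 < 0), esymm_neg _ _ hm]; ring
  · subst hm
    rw [esymm_neg _ _ (by omega : (0:ℤ) - 1 < 0)]
    simp [esymm, Finset.powersetCard_zero]
  · obtain ⟨t, ht⟩ : ∃ t, m.toNat = t + 1 := ⟨(m - 1).toNat, by omega⟩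
    have ht' : (m - 1).toNat = t := by omega
    unfold esymm
    rw [if_pos (by omega), if_pos (by omega), if_pos (by omega), ht, ht']
    rw [← Finset.esymm_map_val x, ← Finset.esymm_map_val (x ∘ Fin.succ),
      ← Finset.esymm_map_val (x ∘ Fin.succ), univ_val_map_succ, multiset_esymm_cons]
    ring

lemma chooseNA (K i : ℕ) :
    Nat.choose (K + 2) (i + 1) * ((i + 1) * (K + 1 - i)) = Nat.choose K i * ((K + 1) * (K + 2)) := by
  have A := Nat.add_one_mul_choose_eq (K + 1) i
  have B := Nat.choose_mul_succ_eq K i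
  calc Nat.choose (K + 2) (i + 1) * ((i + 1) * (K + 1 - i))
      = (Nat.choose (K + 1 + 1) (i + 1) * (i + 1)) * (K + 1 - i) := by ring
    _ = (Nat.succ (K + 1) * Nat.choose (K + 1) i) * (K + 1 - i) := by rw [A]
    _ = (K + 2) * (Nat.choose (K + 1) i * (K + 1 - i)) := by simp [Nat.succ_eq_add_one]; ring
    _ = (K + 2) * (Nat.choose K i * (K + 1)) := by rw [← B]
    _ = Nat.choose K i * ((K + 1) * (K + 2)) := by ring

lemma chooseNB (K i : ℕ) :
    Nat.choose (K + 2) (i + 2) * ((i + 1) * (i + 2)) = Nat.choose K i * ((K + 1) * (K + 2)) := by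
  have A := Nat.add_one_mul_choose_eq (K + 1) (i + 1)
  have B := Nat.add_one_mul_choose_eq K i
  calc Nat.choose (K + 2) (i + 2) * ((i + 1) * (i + 2))
      = (Nat.choose (K + 1 + 1) (i + 1 + 1) * (i + 1 + 1)) * (i + 1) := by ring
    _ = (Nat.succ (K + 1) * Nat.choose (K + 1) (i + 1)) * (i + 1) := by rw [A]
    _ = (K + 2) * (Nat.choose (K + 1) (i + 1) * Nat.succ i) := by
        simp [Nat.succ_eq_add_one]; ring
    _ = (K + 2) * (Nat.succ K * Nat.choose K i) := by rw [Nat.succ_eq_add_one, ← B]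
    _ = Nat.choose K i * ((K + 1) * (K + 2)) := by simp [Nat.succ_eq_add_one]; ring

lemma chooseNC (K i : ℕ) :
    Nat.choose (K + 2) i * ((K + 2 - i) * (K + 1 - i)) = Nat.choose K i * ((K + 1) * (K + 2)) := by
  have A := Nat.choose_mul_succ_eq (K + 1) i
  have B := Nat.choose_mul_succ_eq K i
  calc Nat.choose (K + 2) i * ((K + 2 - i) * (K + 1 - i))
      = (Nat.choose (K + 1 + 1) i * (K + 1 + 1 - i)) * (K + 1 - i) := by ring_nf
    _ = (Nat.choose (K + 1) i * (K + 1 + 1)) * (K + 1 - i) := by rw [← A]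
    _ = (K + 2) * (Nat.choose (K + 1) i * (K + 1 - i)) := by ring_nf
    _ = (K + 2) * (Nat.choose K i * (K + 1)) := by rw [← B]
    _ = Nat.choose K i * ((K + 1) * (K + 2)) := by ring

lemma dvalA (K i : ℕ) (hi : i ≤ K) :
    (Nat.choose K i : ℝ) / (Nat.choose (K + 2) (K + 1 - i)) =
      ((i : ℝ) + 1) * ((K : ℝ) + 1 - i) / (((K : ℝ) + 1) * ((K : ℝ) + 2)) := by
  have hsym : Nat.choose (K + 2) (K + 1 - i) = Nat.choose (K + 2) (i + 1) := by
    rw [show K + 1 - i = K + 2 - (i + 1) by omega, Nat.choose_symm (by omega)]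
  have hpos : ((Nat.choose (K + 2) (i + 1) : ℕ) : ℝ) ≠ 0 := by
    exact_mod_cast (Nat.choose_pos (show i + 1 ≤ K + 2 by omega)).ne'
  rw [hsym, div_eq_div_iff hpos (by positivity)]
  have h := chooseNA K i
  have hc : ((K + 1 - i : ℕ) : ℝ) = (K : ℝ) + 1 - i := by
    push_cast [Nat.cast_sub (show i ≤ K + 1 by omega)]; ring
  have h' := congrArg (Nat.cast : ℕ → ℝ) h
  push_cast at h'
  rw [hc] at h'
  nlinarith [h']

lemma dvalB (K i : ℕ) (hi : i ≤ K) :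
    (Nat.choose K i : ℝ) / (Nat.choose (K + 2) (K - i)) =
      ((i : ℝ) + 1) * ((i : ℝ) + 2) / (((K : ℝ) + 1) * ((K : ℝ) + 2)) := by
  have hsym : Nat.choose (K + 2) (K - i) = Nat.choose (K + 2) (i + 2) := by
    rw [show K - i = K + 2 - (i + 2) by omega, Nat.choose_symm (by omega)]
  have hpos : ((Nat.choose (K + 2) (i + 2) : ℕ) : ℝ) ≠ 0 := by
    exact_mod_cast (Nat.choose_pos (show i + 2 ≤ K + 2 by omega)).ne'
  rw [hsym, div_eq_div_iff hpos (by positivity)]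
  have h' := congrArg (Nat.cast : ℕ → ℝ) (chooseNB K i)
  push_cast at h'
  nlinarith [h']

lemma dvalC (K i : ℕ) (hi : i ≤ K) :
    (Nat.choose K i : ℝ) / (Nat.choose (K + 2) (K + 2 - i)) =
      ((K : ℝ) + 2 - i) * ((K : ℝ) + 1 - i) / (((K : ℝ) + 1) * ((K : ℝ) + 2)) := by
  have hsym : Nat.choose (K + 2) (K + 2 - i) = Nat.choose (K + 2) i := by
    rw [Nat.choose_symm (by omega)]
  have hpos : ((Nat.choose (K + 2) i : ℕ) : ℝ) ≠ 0 := by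
    exact_mod_cast (Nat.choose_pos (show i ≤ K + 2 by omega)).ne'
  rw [hsym, div_eq_div_iff hpos (by positivity)]
  have h' := congrArg (Nat.cast : ℕ → ℝ) (chooseNC K i)
  have hc1 : ((K + 1 - i : ℕ) : ℝ) = (K : ℝ) + 1 - i := by
    push_cast [Nat.cast_sub (show i ≤ K + 1 by omega)]; ring
  have hc2 : ((K + 2 - i : ℕ) : ℝ) = (K : ℝ) + 2 - i := by
    push_cast [Nat.cast_sub (show i ≤ K + 2 by omega)]; ring
  push_cast at h'
  rw [hc1, hc2] at h'
  nlinarith [h']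

lemma shift0 (K : ℕ) (α : ℝ) (a : ℤ → ℝ) (ha0 : ∀ m : ℤ, m < 0 → a m = 0) (c : ℕ → ℝ) :
    ∑ i ∈ range (K + 1), c i * α ^ i * a ((K : ℤ) - i)
      = ∑ i ∈ range (K + 1 + 1 + 1), c i * α ^ i * a ((K : ℤ) - i) := by
  apply Finset.sum_subset (Finset.range_subset_range.2 (by omega))
  intro x hx hnx
  rw [Finset.mem_range] at hx
  rw [Finset.mem_range, not_lt] at hnx
  rw [ha0 _ (by omega), mul_zero]

lemma shift1 (K : ℕ) (α : ℝ) (a : ℤ → ℝ) (ha0 : ∀ m : ℤ, m < 0 → a m = 0)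
    (c d : ℕ → ℝ) (hd0 : d 0 = 0) (hd : ∀ i, d (i + 1) = c i) :
    α * ∑ i ∈ range (K + 1), c i * α ^ i * a ((K : ℤ) - 1 - i)
      = ∑ i ∈ range (K + 1 + 1 + 1), d i * α ^ i * a ((K : ℤ) - i) := by
  conv_rhs => rw [Finset.sum_range_succ']
  rw [hd0, zero_mul, zero_mul, add_zero]
  have hres : ∑ i ∈ range (K + 1 + 1), d (i + 1) * α ^ (i + 1) * a ((K : ℤ) - (i + 1 : ℕ))
      = ∑ i ∈ range (K + 1), d (i + 1) * α ^ (i + 1) * a ((K : ℤ) - (i + 1 : ℕ)) := by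
    symm
    apply Finset.sum_subset (Finset.range_subset_range.2 (by omega))
    intro x hx hnx
    rw [Finset.mem_range] at hx
    rw [Finset.mem_range, not_lt] at hnx
    rw [ha0 _ (by push_cast; omega), mul_zero]
  rw [hres, Finset.mul_sum]
  refine Finset.sum_congr rfl fun i _ => ?_
  rw [hd, show ((K : ℤ) - ((i + 1 : ℕ) : ℤ)) = (K : ℤ) - 1 - i by push_cast; ring]
  ring

lemma shift2 (K : ℕ) (α : ℝ) (a : ℤ → ℝ)
    (c e : ℕ → ℝ) (he0 : e 0 = 0) (he1 : e 1 = 0) (he : ∀ i, e (i + 2) = c i) :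
    α ^ 2 * ∑ i ∈ range (K + 1), c i * α ^ i * a ((K : ℤ) - 2 - i)
      = ∑ i ∈ range (K + 1 + 1 + 1), e i * α ^ i * a ((K : ℤ) - i) := by
  conv_rhs => rw [Finset.sum_range_succ', Finset.sum_range_succ']
  rw [he0, show (0:ℕ) + 1 = 1 from rfl, he1, zero_mul, zero_mul, zero_mul, zero_mul, add_zero,
    add_zero, Finset.mul_sum]
  refine Finset.sum_congr rfl fun i _ => ?_
  rw [show i + 1 + 1 = i + 2 from rfl, he,
    show ((K : ℤ) - ((i + 2 : ℕ) : ℤ)) = (K : ℤ) - 2 - i by push_cast; ring]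
  ring

lemma shiftm1 (K : ℕ) (α : ℝ) (a : ℤ → ℝ) (ha0 : ∀ m : ℤ, m < 0 → a m = 0)
    (haK : ∀ m : ℤ, (K : ℤ) < m → a m = 0) (c : ℕ → ℝ) (hcK : c (K + 1) = 0) :
    ∑ i ∈ range (K + 1), c i * α ^ i * a ((K : ℤ) + 1 - i)
      = ∑ i ∈ range (K + 1 + 1 + 1), (α * c (i + 1)) * α ^ i * a ((K : ℤ) - i) := by
  have hext : ∑ i ∈ range (K + 1), c i * α ^ i * a ((K : ℤ) + 1 - i)
      = ∑ i ∈ range (K + 1 + 1 + 1), c i * α ^ i * a ((K : ℤ) + 1 - i) := by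
    apply Finset.sum_subset (Finset.range_subset_range.2 (by omega))
    intro x hx hnx
    rw [Finset.mem_range] at hx
    rw [Finset.mem_range, not_lt] at hnx
    rcases Nat.lt_or_ge x (K + 2) with h | h
    · have hx' : x = K + 1 := by omega
      rw [hx', hcK, zero_mul, zero_mul]
    · rw [ha0 _ (by omega), mul_zero]
  rw [hext]
  conv_lhs => rw [Finset.sum_range_succ']
  have h0 : c 0 * α ^ 0 * a ((K : ℤ) + 1 - ((0 : ℕ) : ℤ)) = 0 := by
    rw [haK _ (by push_cast; omega), mul_zero]
  rw [h0, add_zero]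
  have hres : ∑ i ∈ range (K + 1 + 1), c (i + 1) * α ^ (i + 1) * a ((K : ℤ) + 1 - ((i + 1 : ℕ) : ℤ))
      = ∑ i ∈ range (K + 1 + 1 + 1), c (i + 1) * α ^ (i + 1) * a ((K : ℤ) + 1 - ((i + 1 : ℕ) : ℤ)) := by
    apply Finset.sum_subset (Finset.range_subset_range.2 (by omega))
    intro x hx hnx
    rw [Finset.mem_range] at hx
    rw [Finset.mem_range, not_lt] at hnx
    rw [ha0 _ (by push_cast; omega), mul_zero]
  rw [hres]
  refine Finset.sum_congr rfl fun i _ => ?_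
  rw [show ((K : ℤ) + 1 - ((i + 1 : ℕ) : ℤ)) = (K : ℤ) - i by push_cast; ring]
  ring

lemma shiftm2 (K : ℕ) (α : ℝ) (a : ℤ → ℝ) (ha0 : ∀ m : ℤ, m < 0 → a m = 0)
    (haK : ∀ m : ℤ, (K : ℤ) < m → a m = 0) (c : ℕ → ℝ)
    (hcK1 : c (K + 1) = 0) (hcK2 : c (K + 2) = 0) :
    ∑ i ∈ range (K + 1), c i * α ^ i * a ((K : ℤ) + 2 - i)
      = ∑ i ∈ range (K + 1 + 1 + 1), (α ^ 2 * c (i + 2)) * α ^ i * a ((K : ℤ) - i) := by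
  have hext : ∑ i ∈ range (K + 1), c i * α ^ i * a ((K : ℤ) + 2 - i)
      = ∑ i ∈ range (K + 1 + 1 + 1), c i * α ^ i * a ((K : ℤ) + 2 - i) := by
    apply Finset.sum_subset (Finset.range_subset_range.2 (by omega))
    intro x hx hnx
    rw [Finset.mem_range] at hx
    rw [Finset.mem_range, not_lt] at hnx
    rcases Nat.lt_or_ge x (K + 2) with h | h
    · have hx' : x = K + 1 := by omega
      rw [hx', hcK1, zero_mul, zero_mul]
    · have hx' : x = K + 2 := by omega
      rw [hx', hcK2, zero_mul, zero_mul]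
  rw [hext]
  conv_lhs => rw [Finset.sum_range_succ', Finset.sum_range_succ']
  have h0 : c 0 * α ^ 0 * a ((K : ℤ) + 2 - ((0 : ℕ) : ℤ)) = 0 := by
    rw [haK _ (by push_cast; omega), mul_zero]
  have h1 : c (0 + 1) * α ^ (0 + 1) * a ((K : ℤ) + 2 - ((0 + 1 : ℕ) : ℤ)) = 0 := by
    rw [haK _ (by push_cast; omega), mul_zero]
  rw [h0, h1, add_zero, add_zero]
  have hres : ∑ i ∈ range (K + 1), c (i + 1 + 1) * α ^ (i + 1 + 1) * a ((K : ℤ) + 2 - ((i + 1 + 1 : ℕ) : ℤ))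
      = ∑ i ∈ range (K + 1 + 1 + 1), c (i + 1 + 1) * α ^ (i + 1 + 1) * a ((K : ℤ) + 2 - ((i + 1 + 1 : ℕ) : ℤ)) := by
    apply Finset.sum_subset (Finset.range_subset_range.2 (by omega))
    intro x hx hnx
    rw [Finset.mem_range] at hx
    rw [Finset.mem_range, not_lt] at hnx
    rw [ha0 _ (by push_cast; omega), mul_zero]
  rw [hres]
  refine Finset.sum_congr rfl fun i _ => ?_
  rw [show i + 1 + 1 = i + 2 from rfl,
    show ((K : ℤ) + 2 - ((i + 2 : ℕ) : ℤ)) = (K : ℤ) - i by push_cast; ring]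
  ring

lemma case1 (K : ℕ) (α : ℝ) (a : ℤ → ℝ) (ha0 : ∀ m : ℤ, m < 0 → a m = 0)
    (haK : ∀ m : ℤ, (K : ℤ) < m → a m = 0) :
    ∑ i ∈ range (K + 1), (((i : ℝ) + 1) * ((K : ℝ) + 1 - i)) * α ^ i *
        (α ^ 2 * a ((K : ℤ) - 1 - i) - 2 * α * a ((K : ℤ) - i) + a ((K : ℤ) + 1 - i))
      = ∑ i ∈ range (K + 1 + 1 + 1), (-2 * α) * (α ^ i * a ((K : ℤ) - i)) := by
  have hsplit : ∑ i ∈ range (K + 1), (((i : ℝ) + 1) * ((K : ℝ) + 1 - i)) * α ^ i *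
        (α ^ 2 * a ((K : ℤ) - 1 - i) - 2 * α * a ((K : ℤ) - i) + a ((K : ℤ) + 1 - i))
      = α * (α * ∑ i ∈ range (K + 1),
          (((i : ℝ) + 1) * ((K : ℝ) + 1 - i)) * α ^ i * a ((K : ℤ) - 1 - i))
        + (-2 * α) * (∑ i ∈ range (K + 1),
          (((i : ℝ) + 1) * ((K : ℝ) + 1 - i)) * α ^ i * a ((K : ℤ) - i))
        + ∑ i ∈ range (K + 1),
          (((i : ℝ) + 1) * ((K : ℝ) + 1 - i)) * α ^ i * a ((K : ℤ) + 1 - i) := by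
    simp only [Finset.mul_sum, ← Finset.sum_add_distrib]
    exact Finset.sum_congr rfl fun i _ => by ring
  rw [hsplit,
    shift1 K α a ha0 (fun i => ((i : ℝ) + 1) * ((K : ℝ) + 1 - i))
      (fun j => (j : ℝ) * ((K : ℝ) + 2 - j)) (by norm_num) (fun i => by push_cast; ring),
    shift0 K α a ha0 (fun i => ((i : ℝ) + 1) * ((K : ℝ) + 1 - i)),
    shiftm1 K α a ha0 haK (fun i => ((i : ℝ) + 1) * ((K : ℝ) + 1 - i)) (by push_cast; ring)]
  rw [Finset.mul_sum, Finset.mul_sum, ← Finset.sum_add_distrib, ← Finset.sum_add_distrib]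
  refine Finset.sum_congr rfl fun i _ => ?_
  push_cast
  ring

lemma case2 (K : ℕ) (α : ℝ) (a : ℤ → ℝ) (ha0 : ∀ m : ℤ, m < 0 → a m = 0) :
    ∑ i ∈ range (K + 1), (((i : ℝ) + 1) * ((i : ℝ) + 2)) * α ^ i *
        (α ^ 2 * a ((K : ℤ) - 2 - i) - 2 * α * a ((K : ℤ) - 1 - i) + a ((K : ℤ) - i))
      = ∑ i ∈ range (K + 1 + 1 + 1), (2 : ℝ) * (α ^ i * a ((K : ℤ) - i)) := by
  have hsplit : ∑ i ∈ range (K + 1), (((i : ℝ) + 1) * ((i : ℝ) + 2)) * α ^ i *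
        (α ^ 2 * a ((K : ℤ) - 2 - i) - 2 * α * a ((K : ℤ) - 1 - i) + a ((K : ℤ) - i))
      = α ^ 2 * (∑ i ∈ range (K + 1),
          (((i : ℝ) + 1) * ((i : ℝ) + 2)) * α ^ i * a ((K : ℤ) - 2 - i))
        + (-2) * (α * ∑ i ∈ range (K + 1),
          (((i : ℝ) + 1) * ((i : ℝ) + 2)) * α ^ i * a ((K : ℤ) - 1 - i))
        + ∑ i ∈ range (K + 1),
          (((i : ℝ) + 1) * ((i : ℝ) + 2)) * α ^ i * a ((K : ℤ) - i) := by
    simp only [Finset.mul_sum, ← Finset.sum_add_distrib]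
    exact Finset.sum_congr rfl fun i _ => by ring
  rw [hsplit,
    shift2 K α a (fun i => ((i : ℝ) + 1) * ((i : ℝ) + 2))
      (fun j => ((j : ℝ) - 1) * (j : ℝ)) (by norm_num) (by norm_num) (fun i => by push_cast; ring),
    shift1 K α a ha0 (fun i => ((i : ℝ) + 1) * ((i : ℝ) + 2))
      (fun j => (j : ℝ) * ((j : ℝ) + 1)) (by norm_num) (fun i => by push_cast; ring),
    shift0 K α a ha0 (fun i => ((i : ℝ) + 1) * ((i : ℝ) + 2))]
  rw [Finset.mul_sum, ← Finset.sum_add_distrib, ← Finset.sum_add_distrib]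
  refine Finset.sum_congr rfl fun i _ => ?_
  push_cast
  ring

lemma case3 (K : ℕ) (α : ℝ) (a : ℤ → ℝ) (ha0 : ∀ m : ℤ, m < 0 → a m = 0)
    (haK : ∀ m : ℤ, (K : ℤ) < m → a m = 0) :
    ∑ i ∈ range (K + 1), (((K : ℝ) + 2 - i) * ((K : ℝ) + 1 - i)) * α ^ i *
        (α ^ 2 * a ((K : ℤ) - i) - 2 * α * a ((K : ℤ) + 1 - i) + a ((K : ℤ) + 2 - i))
      = ∑ i ∈ range (K + 1 + 1 + 1), (2 * α ^ 2) * (α ^ i * a ((K : ℤ) - i)) := by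
  have hsplit : ∑ i ∈ range (K + 1), (((K : ℝ) + 2 - i) * ((K : ℝ) + 1 - i)) * α ^ i *
        (α ^ 2 * a ((K : ℤ) - i) - 2 * α * a ((K : ℤ) + 1 - i) + a ((K : ℤ) + 2 - i))
      = α ^ 2 * (∑ i ∈ range (K + 1),
          (((K : ℝ) + 2 - i) * ((K : ℝ) + 1 - i)) * α ^ i * a ((K : ℤ) - i))
        + (-2 * α) * (∑ i ∈ range (K + 1),
          (((K : ℝ) + 2 - i) * ((K : ℝ) + 1 - i)) * α ^ i * a ((K : ℤ) + 1 - i))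
        + ∑ i ∈ range (K + 1),
          (((K : ℝ) + 2 - i) * ((K : ℝ) + 1 - i)) * α ^ i * a ((K : ℤ) + 2 - i) := by
    simp only [Finset.mul_sum, ← Finset.sum_add_distrib]
    exact Finset.sum_congr rfl fun i _ => by ring
  rw [hsplit,
    shift0 K α a ha0 (fun i => ((K : ℝ) + 2 - i) * ((K : ℝ) + 1 - i)),
    shiftm1 K α a ha0 haK (fun i => ((K : ℝ) + 2 - i) * ((K : ℝ) + 1 - i))
      (by push_cast; ring),
    shiftm2 K α a ha0 haK (fun i => ((K : ℝ) + 2 - i) * ((K : ℝ) + 1 - i))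
      (by push_cast; ring) (by push_cast; ring)]
  rw [Finset.mul_sum, Finset.mul_sum, ← Finset.sum_add_distrib, ← Finset.sum_add_distrib]
  refine Finset.sum_congr rfl fun i _ => ?_
  push_cast
  ring

lemma main1 (K : ℕ) (α : ℝ) (a e : ℤ → ℝ)
    (ha0 : ∀ m : ℤ, m < 0 → a m = 0) (haK : ∀ m : ℤ, (K : ℤ) < m → a m = 0)
    (hdec : ∀ m : ℤ, e m = α ^ 2 * a (m - 2) - 2 * α * a (m - 1) + a m) :
    ∑ i ∈ range (K + 1), (Nat.choose K i : ℝ) * α ^ i *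
        (e (((K + 1 : ℕ) : ℤ) - i) / ((K + 1 + 1).choose ((((K + 1 : ℕ) : ℤ)) - i).toNat))
      = (-2 * α) / (((K : ℝ) + 1) * ((K : ℝ) + 2)) * ∑ i ∈ range (K + 1), α ^ i * a ((K : ℤ) - i) := by
  have step : ∑ i ∈ range (K + 1), (Nat.choose K i : ℝ) * α ^ i *
        (e (((K + 1 : ℕ) : ℤ) - i) / ((K + 1 + 1).choose ((((K + 1 : ℕ) : ℤ)) - i).toNat))
      = (1 / (((K : ℝ) + 1) * ((K : ℝ) + 2))) * ∑ i ∈ range (K + 1),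
          (((i : ℝ) + 1) * ((K : ℝ) + 1 - i)) * α ^ i *
            (α ^ 2 * a ((K : ℤ) - 1 - i) - 2 * α * a ((K : ℤ) - i) + a ((K : ℤ) + 1 - i)) := by
    rw [Finset.mul_sum]
    refine Finset.sum_congr rfl fun i hi => ?_
    rw [Finset.mem_range] at hi
    have hi' : i ≤ K := by omega
    rw [hdec]
    rw [show (((K + 1 : ℕ) : ℤ) - i).toNat = K + 1 - i by omega]
    rw [show ((K + 1 : ℕ) : ℤ) - i - 2 = (K : ℤ) - 1 - i by push_cast; ring]
    rw [show ((K + 1 : ℕ) : ℤ) - i - 1 = (K : ℤ) - i by push_cast; ring]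
    rw [show ((K + 1 : ℕ) : ℤ) - i = (K : ℤ) + 1 - i by push_cast; ring]
    rw [show K + 1 + 1 = K + 2 from rfl]
    generalize α ^ 2 * a ((K : ℤ) - 1 - ↑i) - 2 * α * a ((K : ℤ) - ↑i) + a ((K : ℤ) + 1 - ↑i) = B
    calc (Nat.choose K i : ℝ) * α ^ i * (B / (Nat.choose (K + 2) (K + 1 - i)))
        = ((Nat.choose K i : ℝ) / (Nat.choose (K + 2) (K + 1 - i))) * (α ^ i * B) := by ring
      _ = (((i : ℝ) + 1) * ((K : ℝ) + 1 - i) / (((K : ℝ) + 1) * ((K : ℝ) + 2))) * (α ^ i * B) := by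
          rw [dvalA K i hi']
      _ = 1 / (((K : ℝ) + 1) * ((K : ℝ) + 2)) *
            ((((i : ℝ) + 1) * ((K : ℝ) + 1 - i)) * α ^ i * B) := by ring
  rw [step, case1 K α a ha0 haK, ← Finset.mul_sum]
  have hbig : ∑ i ∈ range (K + 1 + 1 + 1), α ^ i * a ((K : ℤ) - i)
      = ∑ i ∈ range (K + 1), α ^ i * a ((K : ℤ) - i) := by
    symm
    apply Finset.sum_subset (range_subset_range.2 (by omega))
    intro x hx hnx
    rw [mem_range] at hx
    rw [mem_range, not_lt] at hnx
    rw [ha0 _ (by omega), mul_zero]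
  rw [hbig]
  ring

lemma main2 (K : ℕ) (α : ℝ) (a e : ℤ → ℝ)
    (ha0 : ∀ m : ℤ, m < 0 → a m = 0) (haK : ∀ m : ℤ, (K : ℤ) < m → a m = 0)
    (hdec : ∀ m : ℤ, e m = α ^ 2 * a (m - 2) - 2 * α * a (m - 1) + a m) :
    ∑ i ∈ range (K + 1), (Nat.choose K i : ℝ) * α ^ i *
        (e (((K + 1 : ℕ) : ℤ) - 1 - i) / ((K + 1 + 1).choose ((((K + 1 : ℕ) : ℤ)) - 1 - i).toNat))
      = 2 / (((K : ℝ) + 1) * ((K : ℝ) + 2)) * ∑ i ∈ range (K + 1), α ^ i * a ((K : ℤ) - i) := by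
  have step : ∑ i ∈ range (K + 1), (Nat.choose K i : ℝ) * α ^ i *
        (e (((K + 1 : ℕ) : ℤ) - 1 - i) / ((K + 1 + 1).choose ((((K + 1 : ℕ) : ℤ)) - 1 - i).toNat))
      = (1 / (((K : ℝ) + 1) * ((K : ℝ) + 2))) * ∑ i ∈ range (K + 1),
          (((i : ℝ) + 1) * ((i : ℝ) + 2)) * α ^ i *
            (α ^ 2 * a ((K : ℤ) - 2 - i) - 2 * α * a ((K : ℤ) - 1 - i) + a ((K : ℤ) - i)) := by
    rw [Finset.mul_sum]
    refine Finset.sum_congr rfl fun i hi => ?_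
    rw [Finset.mem_range] at hi
    have hi' : i ≤ K := by omega
    rw [hdec]
    rw [show (((K + 1 : ℕ) : ℤ) - 1 - i).toNat = K - i by omega]
    rw [show ((K + 1 : ℕ) : ℤ) - 1 - i - 2 = (K : ℤ) - 2 - i by push_cast; ring]
    rw [show ((K + 1 : ℕ) : ℤ) - 1 - i - 1 = (K : ℤ) - 1 - i by push_cast; ring]
    rw [show ((K + 1 : ℕ) : ℤ) - 1 - i = (K : ℤ) - i by push_cast; ring]
    rw [show K + 1 + 1 = K + 2 from rfl]
    generalize α ^ 2 * a ((K : ℤ) - 2 - ↑i) - 2 * α * a ((K : ℤ) - 1 - ↑i) + a ((K : ℤ) - ↑i) = B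
    calc (Nat.choose K i : ℝ) * α ^ i * (B / (Nat.choose (K + 2) (K - i)))
        = ((Nat.choose K i : ℝ) / (Nat.choose (K + 2) (K - i))) * (α ^ i * B) := by ring
      _ = (((i : ℝ) + 1) * ((i : ℝ) + 2) / (((K : ℝ) + 1) * ((K : ℝ) + 2))) * (α ^ i * B) := by
          rw [dvalB K i hi']
      _ = 1 / (((K : ℝ) + 1) * ((K : ℝ) + 2)) *
            ((((i : ℝ) + 1) * ((i : ℝ) + 2)) * α ^ i * B) := by ring
  rw [step, case2 K α a ha0, ← Finset.mul_sum]
  have hbig : ∑ i ∈ range (K + 1 + 1 + 1), α ^ i * a ((K : ℤ) - i)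
      = ∑ i ∈ range (K + 1), α ^ i * a ((K : ℤ) - i) := by
    symm
    apply Finset.sum_subset (range_subset_range.2 (by omega))
    intro x hx hnx
    rw [mem_range] at hx
    rw [mem_range, not_lt] at hnx
    rw [ha0 _ (by omega), mul_zero]
  rw [hbig]
  ring

lemma main3 (K : ℕ) (α : ℝ) (a e : ℤ → ℝ)
    (ha0 : ∀ m : ℤ, m < 0 → a m = 0) (haK : ∀ m : ℤ, (K : ℤ) < m → a m = 0)
    (hdec : ∀ m : ℤ, e m = α ^ 2 * a (m - 2) - 2 * α * a (m - 1) + a m) :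
    ∑ i ∈ range (K + 1), (Nat.choose K i : ℝ) * α ^ i *
        (e (((K + 1 : ℕ) : ℤ) + 1 - i) / ((K + 1 + 1).choose ((((K + 1 : ℕ) : ℤ)) + 1 - i).toNat))
      = (2 * α ^ 2) / (((K : ℝ) + 1) * ((K : ℝ) + 2)) * ∑ i ∈ range (K + 1), α ^ i * a ((K : ℤ) - i) := by
  have step : ∑ i ∈ range (K + 1), (Nat.choose K i : ℝ) * α ^ i *
        (e (((K + 1 : ℕ) : ℤ) + 1 - i) / ((K + 1 + 1).choose ((((K + 1 : ℕ) : ℤ)) + 1 - i).toNat))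
      = (1 / (((K : ℝ) + 1) * ((K : ℝ) + 2))) * ∑ i ∈ range (K + 1),
          (((K : ℝ) + 2 - i) * ((K : ℝ) + 1 - i)) * α ^ i *
            (α ^ 2 * a ((K : ℤ) - i) - 2 * α * a ((K : ℤ) + 1 - i) + a ((K : ℤ) + 2 - i)) := by
    rw [Finset.mul_sum]
    refine Finset.sum_congr rfl fun i hi => ?_
    rw [Finset.mem_range] at hi
    have hi' : i ≤ K := by omega
    rw [hdec]
    rw [show (((K + 1 : ℕ) : ℤ) + 1 - i).toNat = K + 2 - i by omega]
    rw [show ((K + 1 : ℕ) : ℤ) + 1 - i - 2 = (K : ℤ) - i by push_cast; ring]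
    rw [show ((K + 1 : ℕ) : ℤ) + 1 - i - 1 = (K : ℤ) + 1 - i by push_cast; ring]
    rw [show ((K + 1 : ℕ) : ℤ) + 1 - i = (K : ℤ) + 2 - i by push_cast; ring]
    rw [show K + 1 + 1 = K + 2 from rfl]
    generalize α ^ 2 * a ((K : ℤ) - ↑i) - 2 * α * a ((K : ℤ) + 1 - ↑i) + a ((K : ℤ) + 2 - ↑i) = B
    calc (Nat.choose K i : ℝ) * α ^ i * (B / (Nat.choose (K + 2) (K + 2 - i)))
        = ((Nat.choose K i : ℝ) / (Nat.choose (K + 2) (K + 2 - i))) * (α ^ i * B) := by ring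
      _ = (((K : ℝ) + 2 - i) * ((K : ℝ) + 1 - i) / (((K : ℝ) + 1) * ((K : ℝ) + 2))) * (α ^ i * B) := by
          rw [dvalC K i hi']
      _ = 1 / (((K : ℝ) + 1) * ((K : ℝ) + 2)) *
            ((((K : ℝ) + 2 - i) * ((K : ℝ) + 1 - i)) * α ^ i * B) := by ring
  rw [step, case3 K α a ha0 haK, ← Finset.mul_sum]
  have hbig : ∑ i ∈ range (K + 1 + 1 + 1), α ^ i * a ((K : ℤ) - i)
      = ∑ i ∈ range (K + 1), α ^ i * a ((K : ℤ) - i) := by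
    symm
    apply Finset.sum_subset (range_subset_range.2 (by omega))
    intro x hx hnx
    rw [mem_range] at hx
    rw [mem_range, not_lt] at hnx
    rw [ha0 _ (by omega), mul_zero]
  rw [hbig]
  ring

lemma hdec_lemma (K : ℕ) (α : ℝ) (z : Fin (K + 1 + 1) → ℝ) (h1 : z 0 = -α) (h2 : z 1 = -α)
    (m : ℤ) :
    esymm (K + 1 + 1) z m
      = α ^ 2 * esymm K ((z ∘ Fin.succ) ∘ Fin.succ) (m - 2)
        - 2 * α * esymm K ((z ∘ Fin.succ) ∘ Fin.succ) (m - 1)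
        + esymm K ((z ∘ Fin.succ) ∘ Fin.succ) m := by
  have e1 := esymm_succ (K + 1) z m
  have e2 := esymm_succ K (z ∘ Fin.succ) (m - 1)
  have e3 := esymm_succ K (z ∘ Fin.succ) m
  have h0 : (z ∘ Fin.succ) 0 = -α := by
    show z (Fin.succ 0) = -α
    rw [Fin.succ_zero_eq_one, h2]
  rw [e2, e3, h0] at e1
  rw [e1, h1, show m - 1 - 1 = m - 2 by ring]
  ring

theorem Ss_equality_case (k : ℕ) (hk : 1 ≤ k) (α : ℝ) (z : Fin (k + 1) → ℝ)
    (h1 : z 0 = -α) (h2 : z 1 = -α) (P : ℝ)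
    (hP : P = ∑ i ∈ Finset.range k,
      α ^ i * esymm (k - 1) (fun j : Fin (k - 1) => z ⟨j.1 + 2, by have := j.2; omega⟩)
        ((k - 1 - i : ℕ) : ℤ)) :
    Ss (k + 1) α z (k - 1) k = (-2 * α / ((k : ℝ) * ((k : ℝ) + 1))) * P ∧
    Ss (k + 1) α z (k - 1) ((k : ℤ) - 1) = (2 / ((k : ℝ) * ((k : ℝ) + 1))) * P ∧
    Ss (k + 1) α z (k - 1) ((k : ℤ) + 1) = (2 * α ^ 2 / ((k : ℝ) * ((k : ℝ) + 1))) * P ∧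
    (P ≠ 0 →
      Ss (k + 1) α z (k - 1) k / Ss (k + 1) α z (k - 1) ((k : ℤ) - 1) = -α ∧
      Ss (k + 1) α z (k - 1) ((k : ℤ) + 1) / Ss (k + 1) α z (k - 1) k = -α) := by
  obtain ⟨K, rfl⟩ : ∃ K, k = K + 1 := ⟨k - 1, by omega⟩
  have ha0 : ∀ m : ℤ, m < 0 → esymm K ((z ∘ Fin.succ) ∘ Fin.succ) m = 0 :=
    fun m hm => esymm_neg _ _ hm
  have haK : ∀ m : ℤ, (K : ℤ) < m → esymm K ((z ∘ Fin.succ) ∘ Fin.succ) m = 0 :=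
    fun m hm => esymm_big _ _ hm
  have hdec := hdec_lemma K α z h1 h2
  have hPa : P = ∑ i ∈ Finset.range (K + 1),
      α ^ i * esymm K ((z ∘ Fin.succ) ∘ Fin.succ) ((K : ℤ) - i) := by
    rw [hP]
    refine Finset.sum_congr rfl fun i hi => ?_
    rw [Finset.mem_range] at hi
    rw [show ((K + 1 - 1 - i : ℕ) : ℤ) = (K : ℤ) - i by omega]
    rfl
  have hD : ((K : ℝ) + 1) * ((K : ℝ) + 2) ≠ 0 := by positivity
  have e1 : Ss (K + 1 + 1) α z (K + 1 - 1) ((K + 1 : ℕ) : ℤ)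
      = (-2 * α) / (((K : ℝ) + 1) * ((K : ℝ) + 2)) * ∑ i ∈ range (K + 1),
          α ^ i * esymm K ((z ∘ Fin.succ) ∘ Fin.succ) ((K : ℤ) - i) := by
    simp only [Ss, Esymm, Nat.add_sub_cancel]
    exact main1 K α (fun m => esymm K ((z ∘ Fin.succ) ∘ Fin.succ) m)
      (fun m => esymm (K + 1 + 1) z m) ha0 haK hdec
  have e2 : Ss (K + 1 + 1) α z (K + 1 - 1) (((K + 1 : ℕ) : ℤ) - 1)
      = 2 / (((K : ℝ) + 1) * ((K : ℝ) + 2)) * ∑ i ∈ range (K + 1),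
          α ^ i * esymm K ((z ∘ Fin.succ) ∘ Fin.succ) ((K : ℤ) - i) := by
    simp only [Ss, Esymm, Nat.add_sub_cancel]
    exact main2 K α (fun m => esymm K ((z ∘ Fin.succ) ∘ Fin.succ) m)
      (fun m => esymm (K + 1 + 1) z m) ha0 haK hdec
  have e3 : Ss (K + 1 + 1) α z (K + 1 - 1) (((K + 1 : ℕ) : ℤ) + 1)
      = (2 * α ^ 2) / (((K : ℝ) + 1) * ((K : ℝ) + 2)) * ∑ i ∈ range (K + 1),
          α ^ i * esymm K ((z ∘ Fin.succ) ∘ Fin.succ) ((K : ℤ) - i) := by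
    simp only [Ss, Esymm, Nat.add_sub_cancel]
    exact main3 K α (fun m => esymm K ((z ∘ Fin.succ) ∘ Fin.succ) m)
      (fun m => esymm (K + 1 + 1) z m) ha0 haK hdec
  rw [← hPa] at e1 e2 e3
  have hc : ((K + 1 : ℕ) : ℝ) * (((K + 1 : ℕ) : ℝ) + 1) = ((K : ℝ) + 1) * ((K : ℝ) + 2) := by
    push_cast; ring
  refine ⟨?_, ?_, ?_, ?_⟩
  · rw [e1, hc]
  · rw [e2, hc]
  · rw [e3, hc]
  · intro hPne
    constructor
    · rw [e1, e2]
      field_simp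
    · rw [e1, e3]
      rcases eq_or_ne α 0 with hα | hα
      · subst hα; simp
      · field_simp
end

section
/- For general n, s ≥ 1, α ∈ ℝ, x ∈ ℝ^n, and s+1 ≤ k ≤ n−1, the Newton-type inequality S_{k;s}(x)² ≥ S_{k-1;s}(x)S_{k+1;s}(x) holds, where S_{m;s}(x) = ∑_{i=0}^s C(s,i)α^i E_{m-i}(x). -/
open Polynomial

namespace SsAux
noncomputable def pstep (d : ℕ) (f : ℝ[X]) : ℝ[X] := C (d : ℝ) * f - X * derivative f

noncomputable def astep (α : ℝ) (d : ℕ) (f : ℝ[X]) : ℝ[X] := pstep d f + C α * derivative f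

lemma coeff_pstep (d : ℕ) (f : ℝ[X]) (j : ℕ) :
    (pstep d f).coeff j = ((d : ℝ) - j) * f.coeff j := by
  cases j with
  | zero => simp [pstep, coeff_derivative]
  | succ i =>
    simp only [pstep, coeff_sub, coeff_C_mul, coeff_X_mul, coeff_derivative]
    push_cast
    ring

lemma coeff_astep (α : ℝ) (d : ℕ) (f : ℝ[X]) (j : ℕ) :
    (astep α d f).coeff j = ((d : ℝ) - j) * f.coeff j + α * ((j : ℝ) + 1) * f.coeff (j + 1) := by
  simp only [astep, coeff_add, coeff_pstep, coeff_C_mul, coeff_derivative]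
  ring

lemma natDegree_pstep_le {f : ℝ[X]} {d : ℕ} (h : f.natDegree ≤ d) :
    (pstep d f).natDegree ≤ d - 1 := by
  rw [natDegree_le_iff_coeff_eq_zero]
  intro m hm
  rw [coeff_pstep]
  by_cases hmd : m = d
  · subst hmd; simp
  · have : f.coeff m = 0 := coeff_eq_zero_of_natDegree_lt (by omega)
    rw [this, mul_zero]

lemma natDegree_astep_le {f : ℝ[X]} {d : ℕ} (α : ℝ) (h : f.natDegree ≤ d) :
    (astep α d f).natDegree ≤ d - 1 := by
  rw [natDegree_le_iff_coeff_eq_zero]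
  intro m hm
  rw [coeff_astep]
  have h2 : f.coeff (m + 1) = 0 := coeff_eq_zero_of_natDegree_lt (by omega)
  by_cases hmd : m = d
  · subst hmd; simp [h2]
  · have : f.coeff m = 0 := coeff_eq_zero_of_natDegree_lt (by omega)
    rw [this, h2]; ring

lemma pstep_eq_reflect {f : ℝ[X]} {d : ℕ} (h : f.natDegree ≤ d) :
    pstep d f = reflect (d - 1) (derivative (reflect d f)) := by
  ext j
  rw [coeff_pstep, coeff_reflect, coeff_derivative, coeff_reflect]
  by_cases hj : j + 1 ≤ d
  · rw [revAt_le (by omega : j ≤ d - 1)]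
    have h2 : d - 1 - j + 1 = d - j := by omega
    rw [h2, revAt_le (by omega : d - j ≤ d)]
    have h3 : d - (d - j) = j := by omega
    rw [h3]
    have h4 : ((d - 1 - j : ℕ) : ℝ) + 1 = (d : ℝ) - j := by
      have : ((d - 1 - j : ℕ) : ℝ) = (d : ℝ) - 1 - j := by
        push_cast [Nat.cast_sub (by omega : j ≤ d - 1), Nat.cast_sub (by omega : 1 ≤ d)]
        ring
      rw [this]; ring
    rw [h4]; ring
  · by_cases hd : j ≤ d - 1
    · -- then j = d - 1 impossible since j+1 > d means j ≥ d; with j ≤ d-1 need d = 0, j = 0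
      have hd0 : d = 0 := by omega
      have hj0 : j = 0 := by omega
      subst hd0; subst hj0
      simp only [revAt_le (le_refl 0), Nat.sub_zero, Nat.zero_sub]
      rw [revAt_eq_self_of_lt (by omega : (0:ℕ) < 1)]
      have : f.coeff 1 = 0 := coeff_eq_zero_of_natDegree_lt (by omega)
      simp [this]
    · rw [revAt_eq_self_of_lt (by omega : d - 1 < j)]
      rw [revAt_eq_self_of_lt (by omega : d < j + 1)]
      have h5 : f.coeff (j + 1) = 0 := coeff_eq_zero_of_natDegree_lt (by omega)
      rw [h5]
      by_cases hjd : j = d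
      · subst hjd; simp
      · have : f.coeff j = 0 := coeff_eq_zero_of_natDegree_lt (by omega)
        rw [this]; ring

lemma splits_derivative (f : ℝ[X]) (hf : f.Splits) :
    (derivative f).Splits := by
  by_cases h0 : derivative f = 0
  · rw [h0]; exact Splits.zero
  · have hnd : f.natDegree ≠ 0 := by
      intro h
      have := eq_C_of_natDegree_le_zero (le_of_eq h)
      rw [this] at h0; simp at h0
    rw [splits_iff_card_roots] at hf ⊢
    have h1 := Polynomial.card_roots_le_derivative f
    have h2 := Polynomial.card_roots' (derivative f)
    have h3 : (derivative f).natDegree < f.natDegree := natDegree_derivative_lt hnd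
    omega

lemma natDegree_reflect_le {f : ℝ[X]} {N : ℕ} (h : f.natDegree ≤ N) :
    (reflect N f).natDegree ≤ N := by
  rw [natDegree_le_iff_coeff_eq_zero]
  intro m hm
  rw [coeff_reflect, revAt_eq_self_of_lt hm]
  exact coeff_eq_zero_of_natDegree_lt (by omega)

lemma splits_reflect_C (c : ℝ) (d : ℕ) : (reflect d (C c)).Splits := by
  have : reflect d (C c) = C c * X ^ d := by
    have := reflect_C_mul_X_pow (R := ℝ) d 0 (c := c)
    simpa using this
  rw [this]
  exact (Splits.C _).mul (Splits.X_pow _)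

/-- a root exists for a splitting polynomial of positive natDegree -/
lemma exists_isRoot_of_splits (f : ℝ[X]) (hf : f.Splits)
    (h0 : f.natDegree ≠ 0) : ∃ r : ℝ, f.IsRoot r := by
  have hf0 : f ≠ 0 := fun h => h0 (by rw [h]; simp)
  rw [splits_iff_card_roots] at hf
  have : 0 < Multiset.card f.roots := by omega
  obtain ⟨r, hr⟩ := Multiset.card_pos_iff_exists_mem.mp this
  exact ⟨r, (mem_roots hf0).mp hr⟩

lemma splits_reflect_aux : ∀ (m : ℕ) (f : ℝ[X]) (d : ℕ), f.natDegree ≤ m → f.natDegree ≤ d →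
    f.Splits → (reflect d f).Splits := by
  intro m
  induction m with
  | zero =>
    intro f d h1 _ _
    rw [eq_C_of_natDegree_le_zero h1]
    exact splits_reflect_C _ _
  | succ m ih =>
    intro f d h1 hd hf
    by_cases h0 : f.natDegree = 0
    · rw [eq_C_of_natDegree_le_zero (le_of_eq h0)]
      exact splits_reflect_C _ _
    · have hf0 : f ≠ 0 := fun h => h0 (by rw [h]; simp)
      obtain ⟨r, hr⟩ := exists_isRoot_of_splits f hf h0
      have hfac : (X - C r) * (f / (X - C r)) = f := mul_div_eq_iff_isRoot.mpr hr
      set g := f / (X - C r) with hg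
      have hg0 : g ≠ 0 := by
        intro h; rw [h, mul_zero] at hfac; exact hf0 hfac.symm
      have hndeg : f.natDegree = 1 + g.natDegree := by
        conv_lhs => rw [← hfac]
        rw [natDegree_mul (X_sub_C_ne_zero r) hg0, natDegree_X_sub_C]
      have hgsplit : g.Splits := by
        have := splits_X_sub_C_mul_iff.mp (hfac.symm ▸ hf : ((X - C r) * g).Splits)
        exact this
      have hd1 : d = 1 + (d - 1) := by omega
      have : reflect d f = reflect 1 (X - C r) * reflect (d - 1) g := by
        conv_lhs => rw [← hfac, hd1]
        exact reflect_mul _ _ (by rw [natDegree_X_sub_C]) (by omega)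
      rw [this]
      refine Splits.mul (Splits.of_natDegree_le_one (natDegree_reflect_le (by rw [natDegree_X_sub_C]))) ?_
      exact ih g (d - 1) (by omega) (by omega) hgsplit

lemma splits_reflect {f : ℝ[X]} {d : ℕ} (hd : f.natDegree ≤ d)
    (hf : f.Splits) : (reflect d f).Splits :=
  splits_reflect_aux f.natDegree f d le_rfl hd hf

lemma splits_comp_X_add_C_aux : ∀ (m : ℕ) (f : ℝ[X]) (a : ℝ), f.natDegree ≤ m →
    f.Splits → (f.comp (X + C a)).Splits := by
  intro m
  induction m with
  | zero =>
    intro f a h1 _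
    rw [eq_C_of_natDegree_le_zero h1]
    simp only [C_comp]
    exact Splits.C _
  | succ m ih =>
    intro f a h1 hf
    by_cases h0 : f.natDegree = 0
    · rw [eq_C_of_natDegree_le_zero (le_of_eq h0)]
      simp only [C_comp]
      exact Splits.C _
    · have hf0 : f ≠ 0 := fun h => h0 (by rw [h]; simp)
      obtain ⟨r, hr⟩ := exists_isRoot_of_splits f hf h0
      have hfac : (X - C r) * (f / (X - C r)) = f := mul_div_eq_iff_isRoot.mpr hr
      set g := f / (X - C r) with hg
      have hg0 : g ≠ 0 := by
        intro h; rw [h, mul_zero] at hfac; exact hf0 hfac.symm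
      have hndeg : f.natDegree = 1 + g.natDegree := by
        conv_lhs => rw [← hfac]
        rw [natDegree_mul (X_sub_C_ne_zero r) hg0, natDegree_X_sub_C]
      have hgsplit : g.Splits := by
        exact splits_X_sub_C_mul_iff.mp (hfac.symm ▸ hf : ((X - C r) * g).Splits)
      have : f.comp (X + C a) = (X - C r).comp (X + C a) * g.comp (X + C a) := by
        conv_lhs => rw [← hfac]
        rw [mul_comp]
      rw [this]
      refine Splits.mul (Splits.of_natDegree_le_one ?_) (ih g a (by omega) hgsplit)
      · apply natDegree_comp_le.trans
        simp [natDegree_X_sub_C]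

lemma splits_comp_X_add_C {f : ℝ[X]} (a : ℝ) (hf : f.Splits) :
    (f.comp (X + C a)).Splits :=
  splits_comp_X_add_C_aux f.natDegree f a le_rfl hf

end SsAux

namespace SsAux

lemma splits_pstep {f : ℝ[X]} {d : ℕ} (h : f.natDegree ≤ d)
    (hf : f.Splits) : (pstep d f).Splits := by
  rw [pstep_eq_reflect h]
  exact splits_reflect (natDegree_derivative_le _ |>.trans (by
    have := natDegree_reflect_le h; omega)) (splits_derivative _ (splits_reflect h hf))

lemma astep_eq (α : ℝ) (d : ℕ) (f : ℝ[X]) :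
    astep α d f = (pstep d (f.comp (X + C α))).comp (X - C α) := by
  have hτσ : (X + C α).comp (X - C α) = (X : ℝ[X]) := by
    simp [add_comp]
  simp only [pstep, astep, derivative_comp, derivative_X_add_C, sub_comp, mul_comp, C_comp,
    X_comp, one_mul, comp_assoc, hτσ, comp_X]
  ring

lemma splits_comp_X_sub_C {f : ℝ[X]} (a : ℝ) (hf : f.Splits) :
    (f.comp (X - C a)).Splits := by
  have : X - C a = X + C (-a) := by rw [map_neg, sub_eq_add_neg]
  rw [this]
  exact splits_comp_X_add_C _ hf

lemma splits_astep {f : ℝ[X]} {d : ℕ} (α : ℝ) (h : f.natDegree ≤ d)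
    (hf : f.Splits) : (astep α d f).Splits := by
  rw [astep_eq]
  apply splits_comp_X_sub_C
  apply splits_pstep _ (splits_comp_X_add_C _ hf)
  calc (f.comp (X + C α)).natDegree ≤ f.natDegree * (X + C α).natDegree := natDegree_comp_le
  _ ≤ d := by rw [natDegree_X_add_C]; omega

lemma quad_disc {q : ℝ[X]} (hdeg : q.natDegree ≤ 2) (hsp : q.Splits) :
    4 * (q.coeff 0 * q.coeff 2) ≤ q.coeff 1 ^ 2 := by
  by_cases h2 : q.coeff 2 = 0
  · rw [h2]; nlinarith [sq_nonneg (q.coeff 1)]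
  · have hq2 : q.natDegree = 2 := by
      have : 2 ≤ q.natDegree := le_natDegree_of_ne_zero h2
      omega
    obtain ⟨r, hr⟩ := exists_isRoot_of_splits q hsp (by omega)
    have heval : q.coeff 0 + q.coeff 1 * r + q.coeff 2 * r ^ 2 = 0 := by
      have := hr
      rw [IsRoot, eval_eq_sum_range, hq2] at this
      simp [Finset.sum_range_succ] at this
      nlinarith [this]
    have hm : (q.coeff 0 + q.coeff 1 * r + q.coeff 2 * r ^ 2) * q.coeff 2 = 0 := by
      rw [heval]; ring
    nlinarith [sq_nonneg (2 * q.coeff 2 * r + q.coeff 1), hm]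

end SsAux

namespace SsAux

lemma choose_succ_cast (N k : ℕ) (hk : k ≤ N + 1) :
    (N.choose k : ℝ) * ((N : ℝ) + 1) = ((N + 1).choose k : ℝ) * ((N : ℝ) + 1 - k) := by
  have h := congrArg (Nat.cast : ℕ → ℝ) (Nat.choose_mul_succ_eq N k)
  push_cast [Nat.cast_sub hk] at h
  linarith [h]

lemma succ_choose_cast (N k : ℕ) :
    ((N : ℝ) + 1) * (N.choose k : ℝ) = ((N + 1).choose (k + 1) : ℝ) * ((k : ℝ) + 1) := by
  have h := congrArg (Nat.cast : ℕ → ℝ) (Nat.add_one_mul_choose_eq N k)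
  push_cast at h
  linarith [h]

lemma newton_coeff : ∀ (N : ℕ) (g : ℝ[X]), g.Splits → g.natDegree ≤ N →
    ∀ j : ℕ, 1 ≤ j → j + 1 ≤ N →
    ((N.choose j : ℝ)) ^ 2 * (g.coeff (j - 1) * g.coeff (j + 1)) ≤
      (N.choose (j - 1) : ℝ) * ((N.choose (j + 1) : ℝ)) * g.coeff j ^ 2 := by
  intro N
  induction N with
  | zero => intro g _ _ j h1 h2; omega
  | succ N ih =>
    intro g hsp hdeg j hj1 hj2
    obtain ⟨i, rfl⟩ : ∃ i, j = i + 1 := ⟨j - 1, by omega⟩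
    simp only [Nat.add_sub_cancel]
    by_cases hcase : i + 2 ≤ N
    · -- use pstep
      have hps := ih (pstep (N + 1) g) (splits_pstep hdeg hsp)
        (by have := natDegree_pstep_le hdeg; omega)
        (i + 1) (by omega) (by omega)
      simp only [Nat.add_sub_cancel, coeff_pstep] at hps
      push_cast at hps
      set a := g.coeff i with ha
      set b := g.coeff (i + 1) with hb
      set c := g.coeff (i + 2) with hc
      have c1 := choose_succ_cast N i (by omega)
      have c2 := choose_succ_cast N (i + 1) (by omega)
      have c3 := choose_succ_cast N (i + 2) (by omega)
      push_cast at c1 c2 c3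
      set p : ℝ := (N : ℝ) + 1 with hp
      have hD1 : (0 : ℝ) < p - i := by
        rw [hp]; have : (i : ℝ) + 2 ≤ N := by exact_mod_cast Nat.cast_le.mpr hcase
        linarith
      have hD2 : (0 : ℝ) < p - (i + 1) := by
        rw [hp]; have : (i : ℝ) + 2 ≤ N := by exact_mod_cast Nat.cast_le.mpr hcase
        linarith
      have hD3 : (0 : ℝ) < p - (i + 2) := by
        rw [hp]; have : (i : ℝ) + 2 ≤ N := by exact_mod_cast Nat.cast_le.mpr hcase
        linarith
      have hp0 : (0 : ℝ) < p := by rw [hp]; positivity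
      have key : ((N + 1).choose (i + 1) : ℝ) ^ 2 * (a * c) * ((p - i) * (p - (i+1)) ^ 2 * (p - (i+2)))
          ≤ ((N + 1).choose i : ℝ) * (((N + 1).choose (i + 2) : ℝ)) * b ^ 2 *
            ((p - i) * (p - (i+1)) ^ 2 * (p - (i+2))) := by
        calc ((N + 1).choose (i + 1) : ℝ) ^ 2 * (a * c) * ((p - i) * (p - (i+1)) ^ 2 * (p - (i+2)))
            = (((N + 1).choose (i + 1) : ℝ) * (p - (i + 1))) ^ 2 * ((p - i) * a * ((p - (i+2)) * c)) := by
              push_cast; ring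
          _ = ((N.choose (i + 1) : ℝ) * p) ^ 2 * ((p - i) * a * ((p - (i+2)) * c)) := by
              rw [c2]
          _ = p ^ 2 * ((N.choose (i + 1) : ℝ) ^ 2 * ((p - i) * a * ((p - (i+2)) * c))) := by ring
          _ ≤ p ^ 2 * ((N.choose i : ℝ) * ((N.choose (i + 2) : ℝ)) * ((p - (i+1)) * b) ^ 2) := by
              apply mul_le_mul_of_nonneg_left _ (by positivity)
              convert hps using 2
              · rfl
              all_goals (push_cast <;> ring)
          _ = ((N.choose i : ℝ) * p) * (((N.choose (i + 2) : ℝ)) * p) * b ^ 2 * (p - (i+1)) ^ 2 := by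
              ring
          _ = (((N + 1).choose i : ℝ) * (p - i)) * ((((N + 1).choose (i + 2) : ℝ)) * (p - (i+2))) * b ^ 2 * (p - (i+1)) ^ 2 := by
              rw [c1, c3]
          _ = ((N + 1).choose i : ℝ) * (((N + 1).choose (i + 2) : ℝ)) * b ^ 2 *
              ((p - i) * (p - (i+1)) ^ 2 * (p - (i+2))) := by ring
      have hpos : (0 : ℝ) < (p - i) * (p - (i+1)) ^ 2 * (p - (i+2)) := by positivity
      exact le_of_mul_le_mul_right key hpos
    · -- j = N
      have hiN : i + 1 = N := by omega
      rcases Nat.lt_or_ge N 2 with hN2 | hN2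
      · -- N = 1, i = 0
        have hN1 : N = 1 := by omega
        have hi0 : i = 0 := by omega
        subst hN1; subst hi0
        have hq := quad_disc (by omega : g.natDegree ≤ 2) hsp
        norm_num [Nat.choose]
        nlinarith [hq]
      · -- derivative step; N ≥ 2, i = N - 1 ≥ 1
        obtain ⟨l, rfl⟩ : ∃ l, i = l + 1 := ⟨i - 1, by omega⟩
        have hd := ih (derivative g) (splits_derivative _ hsp)
          (by have := natDegree_derivative_le g; omega)
          (l + 1) (by omega) (by omega)
        simp only [Nat.add_sub_cancel, coeff_derivative] at hd
        push_cast at hd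
        set a := g.coeff (l + 1) with ha
        set b := g.coeff (l + 2) with hb
        set c := g.coeff (l + 3) with hc
        have c1 := succ_choose_cast N l
        have c2 := succ_choose_cast N (l + 1)
        have c3 := succ_choose_cast N (l + 2)
        push_cast at c1 c2 c3
        set p : ℝ := (N : ℝ) + 1 with hp
        have hp0 : (0 : ℝ) < p := by rw [hp]; positivity
        have hl1 : (0 : ℝ) < (l : ℝ) + 1 := by positivity
        have hl2 : (0 : ℝ) < (l : ℝ) + 2 := by positivity
        have hl3 : (0 : ℝ) < (l : ℝ) + 3 := by positivity
        have key : ((N + 1).choose (l + 2) : ℝ) ^ 2 * (a * c) *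
              (((l:ℝ)+1) * ((l:ℝ)+2) ^ 2 * ((l:ℝ)+3))
            ≤ ((N + 1).choose (l + 1) : ℝ) * (((N + 1).choose (l + 3) : ℝ)) * b ^ 2 *
              (((l:ℝ)+1) * ((l:ℝ)+2) ^ 2 * ((l:ℝ)+3)) := by
          calc ((N + 1).choose (l + 2) : ℝ) ^ 2 * (a * c) * (((l:ℝ)+1) * ((l:ℝ)+2) ^ 2 * ((l:ℝ)+3))
              = (((N + 1).choose (l + 2) : ℝ) * ((l:ℝ)+2)) ^ 2 * ((a * ((l:ℝ)+1)) * (c * ((l:ℝ)+3))) := by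
                ring
            _ = (p * (N.choose (l + 1) : ℝ)) ^ 2 * ((a * ((l:ℝ)+1)) * (c * ((l:ℝ)+3))) := by
                have e2 : l + 1 + 1 = l + 2 := rfl
                rw [c2, e2]; push_cast; ring
            _ = p ^ 2 * ((N.choose (l + 1) : ℝ) ^ 2 * ((a * ((l:ℝ)+1)) * (c * ((l:ℝ)+3)))) := by ring
            _ ≤ p ^ 2 * ((N.choose l : ℝ) * ((N.choose (l + 2) : ℝ)) * (b * ((l:ℝ)+2)) ^ 2) := by
                apply mul_le_mul_of_nonneg_left _ (by positivity)
                convert hd using 2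
                · rfl
                all_goals (push_cast <;> ring)
            _ = (p * (N.choose l : ℝ)) * ((p * (N.choose (l + 2) : ℝ))) * b ^ 2 * ((l:ℝ)+2) ^ 2 := by
                ring
            _ = (((N + 1).choose (l + 1) : ℝ) * ((l:ℝ)+1)) * ((((N + 1).choose (l + 3) : ℝ)) * ((l:ℝ)+3)) * b ^ 2 * ((l:ℝ)+2) ^ 2 := by
                have e3 : l + 2 + 1 = l + 3 := rfl
                rw [c1, c3, e3]; push_cast; ring
            _ = ((N + 1).choose (l + 1) : ℝ) * (((N + 1).choose (l + 3) : ℝ)) * b ^ 2 *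
                (((l:ℝ)+1) * ((l:ℝ)+2) ^ 2 * ((l:ℝ)+3)) := by ring
        have hpos : (0 : ℝ) < ((l:ℝ)+1) * ((l:ℝ)+2) ^ 2 * ((l:ℝ)+3) := by positivity
        have := le_of_mul_le_mul_right key hpos
        convert this using 2 <;> push_cast <;> ring_nf
end SsAux

namespace SsAux

lemma Ss_rec (n : ℕ) (α : ℝ) (x : Fin n → ℝ) (s : ℕ) (m : ℤ) :
    Ss n α x (s + 1) m = Ss n α x s m + α * Ss n α x s (m - 1) := by
  unfold Ss
  rw [Finset.sum_range_succ' _ (s + 1)]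
  have hsplit : ∀ i ∈ Finset.range (s + 1),
      (((s+1).choose (i+1) : ℝ)) * α ^ (i+1) * Esymm n x (m - ((i+1 : ℕ) : ℤ))
      = (s.choose (i+1) : ℝ) * α ^ (i+1) * Esymm n x (m - ((i+1 : ℕ) : ℤ))
        + α * ((s.choose i : ℝ) * α ^ i * Esymm n x ((m - 1) - i)) := by
    intro i _
    have harg : (m - 1) - (i : ℤ) = m - ((i+1 : ℕ) : ℤ) := by push_cast; ring
    rw [harg, Nat.choose_succ_succ]
    push_cast; ring
  rw [Finset.sum_congr rfl hsplit, Finset.sum_add_distrib]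
  have h2 : ∑ i ∈ Finset.range (s + 1), (s.choose (i+1) : ℝ) * α ^ (i+1) * Esymm n x (m - ((i+1:ℕ):ℤ))
      = ∑ i ∈ Finset.range s, (s.choose (i+1) : ℝ) * α ^ (i+1) * Esymm n x (m - ((i+1:ℕ):ℤ)) := by
    rw [Finset.sum_range_succ]
    simp [Nat.choose_succ_self]
  have h3 : Ss n α x s m = (∑ i ∈ Finset.range s, (s.choose (i+1) : ℝ) * α ^ (i+1) * Esymm n x (m - ((i+1:ℕ):ℤ)))
      + (s.choose 0 : ℝ) * α ^ 0 * Esymm n x (m - ((0:ℕ):ℤ)) := by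
    unfold Ss
    rw [Finset.sum_range_succ' _ s]
  have h4 : α * Ss n α x s (m - 1) = ∑ i ∈ Finset.range (s+1), α * ((s.choose i : ℝ) * α ^ i * Esymm n x ((m-1) - i)) := by
    unfold Ss
    rw [Finset.mul_sum]
  rw [h2]
  conv_rhs => rw [Finset.sum_range_succ' (fun i => (s.choose i : ℝ) * α ^ i * Esymm n x (m - i)) s,
    Finset.mul_sum]
  simp only [Nat.choose_zero_right, Nat.choose_zero_right, Nat.cast_one, pow_zero,
    Nat.cast_zero]
  push_cast
  ring

lemma coeff_prod_eq (n : ℕ) (x : Fin n → ℝ) (j : ℕ) (hj : j ≤ n) :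
    (∏ i : Fin n, (X + C (x i))).coeff j = esymm n x ((n : ℤ) - j) := by
  have hcard : (Finset.univ : Finset (Fin n)).card = n := by simp
  rw [Finset.prod_X_add_C_coeff _ _ (by omega : j ≤ (Finset.univ : Finset (Fin n)).card)]
  unfold esymm
  rw [if_pos (by omega : (0:ℤ) ≤ (n:ℤ) - j)]
  have ht : ((n:ℤ) - j).toNat = n - j := by omega
  rw [ht, hcard]

lemma exists_poly (n s : ℕ) (α : ℝ) (x : Fin n → ℝ) (hs : s ≤ n) :
    ∃ (c : ℝ) (g : ℝ[X]), 0 < c ∧ g.Splits ∧ g.natDegree ≤ n - s ∧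
      ∀ j : ℕ, j ≤ n - s →
        g.coeff j = c * (((n - s).choose j : ℕ) : ℝ) * Ss n α x s ((n : ℤ) - j) := by
  induction s with
  | zero =>
    refine ⟨1, ∏ i : Fin n, (X + C (x i)), one_pos, ?_, ?_, ?_⟩
    · exact Splits.prod (fun i _ => Splits.of_natDegree_le_one (natDegree_X_add_C (x i)).le)
    · have : (∏ i : Fin n, (X + C (x i))).natDegree = n := by
        rw [natDegree_prod_of_monic _ _ (fun i _ => monic_X_add_C (x i))]
        simp
      omega
    · intro j hj
      have hj' : j ≤ n := by omega
      rw [coeff_prod_eq n x j hj']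
      have hSs0 : Ss n α x 0 ((n:ℤ) - j) = Esymm n x ((n:ℤ) - j) := by
        unfold Ss
        simp
      rw [hSs0]
      unfold Esymm
      have ht : (((n:ℤ) - j)).toNat = n - j := by omega
      rw [ht]
      have hsymm : (n - 0).choose j = n.choose (n - j) := by
        rw [Nat.sub_zero, ← Nat.choose_symm hj']
      rw [hsymm]
      have hpos : (0:ℝ) < (n.choose (n - j) : ℝ) := by
        exact_mod_cast Nat.choose_pos (by omega)
      have hpos' : (0:ℝ) < (n.choose j : ℝ) := by
        exact_mod_cast Nat.choose_pos hj'
      field_simp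
  | succ s ihs =>
    obtain ⟨c, g, hc, hsp, hdeg, hcoeff⟩ := ihs (by omega)
    obtain ⟨N, hN⟩ : ∃ N, n - s = N + 1 := ⟨n - s - 1, by omega⟩
    have hN' : n - (s + 1) = N := by omega
    refine ⟨c * ((N : ℝ) + 1), astep α (n - s) g, by positivity,
      splits_astep α hdeg hsp, ?_, ?_⟩
    · have := natDegree_astep_le α hdeg; omega
    · intro j hj
      rw [coeff_astep, hcoeff j (by omega), hcoeff (j + 1) (by omega)]
      have harg : (n : ℤ) - ((j + 1 : ℕ) : ℤ) = ((n : ℤ) - j) - 1 := by push_cast; ring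
      rw [harg, hN', hN, Ss_rec]
      have c1 := choose_succ_cast N j (by omega)
      have c2 := succ_choose_cast N j
      push_cast at c1 c2 ⊢
      linear_combination (-(c * Ss n α x s ((n:ℤ) - j))) * c1
        - (c * α * Ss n α x s (((n:ℤ) - j) - 1)) * c2

end SsAux


theorem Ss_newton_general (n s k : ℕ) (α : ℝ) (x : Fin n → ℝ)
    (hs : 1 ≤ s) (hk1 : s + 1 ≤ k) (hk2 : k ≤ n - 1) :
    Ss n α x s k ^ 2 ≥ Ss n α x s ((k : ℤ) - 1) * Ss n α x s ((k : ℤ) + 1) := by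
  have hn3 : k + 1 ≤ n := by omega
  have hsn : s ≤ n := by omega
  obtain ⟨c, g, hc, hsp, hdeg, hcoeff⟩ := SsAux.exists_poly n s α x hsn
  set N := n - s with hNdef
  set j := n - k with hjdef
  have hj1 : 1 ≤ j := by omega
  have hj2 : j + 1 ≤ N := by omega
  have hnew := SsAux.newton_coeff N g hsp hdeg j hj1 hj2
  rw [hcoeff j (by omega), hcoeff (j - 1) (by omega), hcoeff (j + 1) (by omega)] at hnew
  have e1 : (n : ℤ) - (j : ℕ) = (k : ℤ) := by omega
  have e2 : (n : ℤ) - ((j - 1 : ℕ) : ℤ) = (k : ℤ) + 1 := by omega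
  have e3 : (n : ℤ) - ((j + 1 : ℕ) : ℤ) = (k : ℤ) - 1 := by omega
  rw [e1, e2, e3] at hnew
  have hp1 : (0:ℝ) < (N.choose (j - 1) : ℝ) := by
    exact_mod_cast Nat.choose_pos (by omega)
  have hp2 : (0:ℝ) < (N.choose j : ℝ) := by
    exact_mod_cast Nat.choose_pos (by omega)
  have hp3 : (0:ℝ) < (N.choose (j + 1) : ℝ) := by
    exact_mod_cast Nat.choose_pos (by omega)
  set A := Ss n α x s ((k : ℤ) - 1)
  set B := Ss n α x s ((k : ℤ) + 1)
  set S := Ss n α x s (k : ℤ)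
  set P := (N.choose (j - 1) : ℝ) * (N.choose (j + 1)) * (N.choose j) ^ 2 * c ^ 2 with hP
  have hPpos : 0 < P := by rw [hP]; positivity
  have h2 : P * (A * B) ≤ P * S ^ 2 := by
    have l1 : P * (A * B) = (N.choose j : ℝ) ^ 2 *
        (c * (N.choose (j - 1) : ℝ) * B * (c * (N.choose (j + 1) : ℝ) * A)) := by
      rw [hP]; ring
    have l2 : P * S ^ 2 = (N.choose (j - 1) : ℝ) * (N.choose (j + 1)) *
        (c * (N.choose j : ℝ) * S) ^ 2 := by
      rw [hP]; ring
    rw [l1, l2]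
    exact hnew
  exact (mul_le_mul_iff_right₀ hPpos).mp h2
end
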